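/- For any positive integers r, t, the torus C_{4r} □ C_{4t} has edge metric dimension 3. -/

import Mathlib

open SimpleGraph

/-- Distance from a vertex `v` to an edge `e = uw`: `min (d v u) (d v w)`. -/
noncomputable def edgeDist {V : Type*} (G : SimpleGraph V) (v : V) (e : Sym2 V) : ℕ :=
  Sym2.lift ⟨fun u w => min (G.dist v u) (G.dist v w), fun u w => by simp [min_comm]⟩ e

/-- `S` is an edge metric generator: every two distinct edges are distinguished
by some vertex of `S`. -/
def IsEdgeMetricGenerator {V : Type*} (G : SimpleGraph V) (S : Set V) : Prop :=
  ∀ e₁ ∈ G.edgeSet, ∀ e₂ ∈ G.edgeSet, e₁ ≠ e₂ →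
    ∃ v ∈ S, edgeDist G v e₁ ≠ edgeDist G v e₂

/-- The edge metric dimension: minimum cardinality of an edge metric generator. -/
noncomputable def edim {V : Type*} (G : SimpleGraph V) : ℕ :=
  sInf {k | ∃ S : Finset V, S.card = k ∧ IsEdgeMetricGenerator G ↑S}

set_option maxHeartbeats 4000000



/-- cyclic distance between `a` and `b` in `ℤ/N` (naturals `a b < N`). -/
def dN (N a b : ℕ) : ℕ := min (a - b + (b - a)) (N - (a - b + (b - a)))

/-- successor mod `N` for `x < N`. -/
def wN (N x : ℕ) : ℕ := if x + 1 = N then 0 else x + 1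

/-- predecessor mod `N` for `x < N`. -/
def vN (N x : ℕ) : ℕ := if x = 0 then N - 1 else x - 1

/-- distance from `a` to the pair `{x, x+1}` on the cycle. -/
def eN (N a x : ℕ) : ℕ := min (dN N a x) (dN N a (wN N x))

lemma mod2 {c N : ℕ} (hN : 0 < N) (h : c < 2 * N) : c % N = c ∨ c % N + N = c := by
  rcases lt_or_ge c N with h1 | h1
  · left; exact Nat.mod_eq_of_lt h1
  · right
    rw [Nat.mod_eq_sub_mod h1, Nat.mod_eq_of_lt (by omega)]
    omega

lemma val_add {N : ℕ} (a b : Fin N) :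
    (a + b).val = a.val + b.val ∨ (a + b).val + N = a.val + b.val := by
  rw [Fin.add_def]
  exact mod2 a.pos (by omega)

lemma val_sub {N : ℕ} (a b : Fin N) :
    (a - b).val + b.val = a.val ∨ (a - b).val + b.val = a.val + N := by
  rw [Fin.sub_def]
  simp only
  have := a.is_lt; have := b.is_lt
  rcases mod2 (c := N - b.val + a.val) a.pos (by omega) with h | h <;> omega

lemma wn_of {N b bp : ℕ} (hb : b < N) (hbp : bp < N)
    (h : bp = b + 1 ∨ bp + N = b + 1) : bp = wN N b := by
  unfold wN; split_ifs <;> omega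

lemma vn_of {N b bm : ℕ} (hb : b < N) (hbm : bm < N)
    (h : bm + 1 = b ∨ bm + 1 = b + N) : bm = vN N b := by
  unfold vN; split_ifs <;> omega

lemma keyN (N a b bp bm k : ℕ) (ha : a < N) (hb : b < N) (hbp : bp < N) (hbm : bm < N)
    (hw1 : bp = b + 1 ∨ bp + N = b + 1) (hw2 : bm + 1 = b ∨ bm + 1 = b + N)
    (hk : dN N a b = k + 1) : dN N a bp = k ∨ dN N a bm = k := by
  unfold dN at *; omega

lemma cycle_adj_val {N : ℕ} (hN : 2 ≤ N) {a b : Fin N} (h : (cycleGraph N).Adj a b) :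
    a.val + 1 = b.val ∨ b.val + 1 = a.val ∨ (a.val = 0 ∧ b.val + 1 = N) ∨
      (b.val = 0 ∧ a.val + 1 = N) := by
  rw [cycleGraph_adj'] at h
  have h1 := val_sub a b
  have h2 := val_sub b a
  have := a.is_lt; have := b.is_lt
  omega

lemma cycle_connected {N : ℕ} (hN : 1 ≤ N) : (cycleGraph N).Connected := by
  obtain ⟨N', rfl⟩ : ∃ N', N = N' + 1 := ⟨N - 1, by omega⟩
  exact cycleGraph_connected

/-- lower bound: any walk is at least as long as `dN`. -/
lemma dN_le_walk {N : ℕ} (hN : 2 ≤ N) {u v : Fin N} (p : (cycleGraph N).Walk u v) :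
    dN N u.val v.val ≤ p.length := by
  induction p with
  | nil => simp [dN]
  | @cons u w v h p ih =>
      have hadj := cycle_adj_val hN h
      have := u.is_lt; have := w.is_lt; have := v.is_lt
      simp only [SimpleGraph.Walk.length_cons]
      unfold dN at *
      omega

lemma cycle_dist_le {N : ℕ} (hN : 2 ≤ N) (u v : Fin N) :
    (cycleGraph N).dist u v ≤ dN N u.val v.val := by
  haveI : NeZero N := ⟨by omega⟩
  generalize hk : dN N u.val v.val = k
  induction k generalizing v with
  | zero =>
      have : u = v := by
        have := u.is_lt; have := v.is_lt
        unfold dN at hk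
        exact Fin.ext (by omega)
      subst this; simp
  | succ k ih =>
      have hu := u.is_lt; have hv := v.is_lt
      set o : Fin N := ⟨1, by omega⟩ with ho
      have ho1 : o.val = 1 := by rw [ho]
      have hw1 := val_add v o
      have hw2 := val_sub v o
      rw [ho1] at hw1 hw2
      have key := keyN N u.val v.val (v + o).val (v - o).val k u.is_lt v.is_lt
        (v + o).is_lt (v - o).is_lt hw1 hw2 hk
      have adj1 : (cycleGraph N).Adj (v + o) v := by
        rw [cycleGraph_adj']
        left
        rw [add_sub_cancel_left]
      have adj2 : (cycleGraph N).Adj (v - o) v := by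
        rw [cycleGraph_adj']
        right
        rw [sub_sub_cancel]
      rcases key with hk' | hk'
      · calc (cycleGraph N).dist u v ≤ (cycleGraph N).dist u (v + o) +
              (cycleGraph N).dist (v + o) v := (cycle_connected (by omega)).dist_triangle
          _ ≤ k + 1 := by
              have h1 := ih (v + o) hk'
              have h2 : (cycleGraph N).dist (v + o) v = 1 :=
                dist_eq_one_iff_adj.mpr adj1
              omega
      · calc (cycleGraph N).dist u v ≤ (cycleGraph N).dist u (v - o) +
              (cycleGraph N).dist (v - o) v := (cycle_connected (by omega)).dist_triangle
          _ ≤ k + 1 := by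
              have h1 := ih (v - o) hk'
              have h2 : (cycleGraph N).dist (v - o) v = 1 :=
                dist_eq_one_iff_adj.mpr adj2
              omega

theorem cycle_dist {N : ℕ} (hN : 2 ≤ N) (u v : Fin N) :
    (cycleGraph N).dist u v = dN N u.val v.val := by
  refine le_antisymm (cycle_dist_le hN u v) ?_
  obtain ⟨p, hp⟩ := (cycle_connected (N := N) (by omega)).exists_walk_length_eq_dist u v
  rw [← hp]
  exact dN_le_walk hN p


lemma boxProd_walk_le {α β : Type*} {G : SimpleGraph α} {H : SimpleGraph β}
    (hG : G.Connected) (hH : H.Connected) {x y : α × β} (p : (G □ H).Walk x y) :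
    G.dist x.1 y.1 + H.dist x.2 y.2 ≤ p.length := by
  induction p with
  | nil => simp
  | @cons x z y h p ih =>
      simp only [SimpleGraph.Walk.length_cons]
      rcases h with ⟨hA, h2⟩ | ⟨hA, h1⟩
      · have t1 : G.dist x.1 y.1 ≤ G.dist x.1 z.1 + G.dist z.1 y.1 := hG.dist_triangle
        have t2 : G.dist x.1 z.1 = 1 := dist_eq_one_iff_adj.mpr hA
        rw [h2]
        omega
      · have t1 : H.dist x.2 y.2 ≤ H.dist x.2 z.2 + H.dist z.2 y.2 := hH.dist_triangle
        have t2 : H.dist x.2 z.2 = 1 := dist_eq_one_iff_adj.mpr hA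
        rw [h1]
        omega

theorem boxProd_dist {α β : Type*} {G : SimpleGraph α} {H : SimpleGraph β}
    (hG : G.Connected) (hH : H.Connected) (x y : α × β) :
    (G □ H).dist x y = G.dist x.1 y.1 + H.dist x.2 y.2 := by
  refine le_antisymm ?_ ?_
  · obtain ⟨w1, hw1⟩ := hG.exists_walk_length_eq_dist x.1 y.1
    obtain ⟨w2, hw2⟩ := hH.exists_walk_length_eq_dist x.2 y.2
    obtain ⟨x1, x2⟩ := x
    obtain ⟨y1, y2⟩ := y
    have hp := SimpleGraph.dist_le ((w1.boxProdLeft H x2).append (w2.boxProdRight G y1))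
    simp only [SimpleGraph.Walk.length_append, SimpleGraph.Walk.boxProdLeft,
      SimpleGraph.Walk.boxProdRight, SimpleGraph.Walk.length_map] at hp
    have hl : ((w1.boxProdLeft H x2).append (w2.boxProdRight G y1)).length =
        w1.length + w2.length := by
      refine (SimpleGraph.Walk.length_append _ _).trans ?_
      exact congrArg₂ (· + ·) (SimpleGraph.Walk.length_map _ _) (SimpleGraph.Walk.length_map _ _)
    have hp2 := SimpleGraph.dist_le ((w1.boxProdLeft H x2).append (w2.boxProdRight G y1))
    rw [hl] at hp2
    change (G □ H).dist (x1, x2) (y1, y2) ≤ _ at hp2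
    have hw1' : w1.length = G.dist x1 y1 := hw1
    have hw2' : w2.length = H.dist x2 y2 := hw2
    change _ ≤ G.dist x1 y1 + H.dist x2 y2
    omega
  · obtain ⟨p, hp⟩ := (hG.boxProd hH).exists_walk_length_eq_dist x y
    rw [← hp]
    exact boxProd_walk_le hG hH p


section interface
variable {t y y1 y2 c a : ℕ}

lemma A1 (hy : y < 4*t) : dN (4*t) 0 y = min y (4*t - y) := by
  unfold dN; omega

lemma A2 (hy : y < 4*t) : dN (4*t) (2*t) y + dN (4*t) 0 y = 2*t := by
  unfold dN; omega

lemma A3 (hy : y < 4*t) : eN (4*t) 0 y = min y (4*t - 1 - y) := by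
  unfold eN dN wN; split_ifs <;> omega

lemma A4 (hy : y < 4*t) : eN (4*t) (2*t) y + eN (4*t) 0 y + 1 = 2*t := by
  unfold eN dN wN; split_ifs <;> omega

lemma A5 (hy : y < 4*t) : eN (4*t) t y + eN (4*t) t (4*t - 1 - y) + 1 = 2*t := by
  unfold eN dN wN; split_ifs <;> omega

lemma A6 (hy : y < 4*t) (h0 : 0 < y) : dN (4*t) t y + dN (4*t) t (4*t - y) = 2*t := by
  unfold dN; omega

lemma A7 (hy : y < 4*t) (h : dN (4*t) t y = t) : y = 0 ∨ y = 2*t := by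
  unfold dN at h; omega

lemma R1 {M : ℕ} (h1 : y1 < M) (h2 : y2 < M)
    (h : min y1 (M - 1 - y1) = min y2 (M - 1 - y2)) : y1 = y2 ∨ y1 + y2 = M - 1 := by
  omega

lemma R2 {M : ℕ} (h1 : y1 < M) (h2 : y2 < M)
    (h : min y1 (M - y1) = min y2 (M - y2)) : y1 = y2 ∨ (y1 + y2 = M ∧ 0 < y1 ∧ 0 < y2) := by
  omega

-- lower-bound interface
lemma L1 (hc : c < 4*t) (ha : a < 4*t) (ht : 1 ≤ t)
    (h : dN (4*t) c a = 0 ∨ dN (4*t) c a = 2*t) :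
    min (dN (4*t) c a) (dN (4*t) c (wN (4*t) a)) =
      min (dN (4*t) c a) (dN (4*t) c (vN (4*t) a)) := by
  unfold dN wN vN at *; split_ifs at * <;> omega

lemma L2 (hc : c < 4*t) (ha : a < 4*t) (ht : 1 ≤ t)
    (h0 : dN (4*t) c a ≠ 0) (h2 : dN (4*t) c a ≠ 2*t) :
    dN (4*t) c (wN (4*t) a) = dN (4*t) c a + 1 ∨
      dN (4*t) c (vN (4*t) a) = dN (4*t) c a + 1 := by
  unfold dN wN vN at *; split_ifs at * <;> omega

end interface

section main
variable {r t x1 y1 x2 y2 : ℕ}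

theorem T3 (hr : 1 ≤ r) (ht : 1 ≤ t) (hx1 : x1 < 4*r) (hy1 : y1 < 4*t)
    (hx2 : x2 < 4*r) (hy2 : y2 < 4*t)
    (h1 : eN (4*r) 0 x1 + dN (4*t) 0 y1 = dN (4*r) 0 x2 + eN (4*t) 0 y2)
    (h2 : eN (4*r) 0 x1 + dN (4*t) (2*t) y1 = dN (4*r) 0 x2 + eN (4*t) (2*t) y2) :
    False := by
  have a2 := A2 hy1
  have a4 := A4 hy2
  omega

theorem T1 (hr : 1 ≤ r) (ht : 1 ≤ t) (hx1 : x1 < 4*r) (hy1 : y1 < 4*t)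
    (hx2 : x2 < 4*r) (hy2 : y2 < 4*t)
    (h1 : eN (4*r) 0 x1 + dN (4*t) 0 y1 = eN (4*r) 0 x2 + dN (4*t) 0 y2)
    (h2 : eN (4*r) 0 x1 + dN (4*t) (2*t) y1 = eN (4*r) 0 x2 + dN (4*t) (2*t) y2)
    (h3 : eN (4*r) r x1 + dN (4*t) t y1 = eN (4*r) r x2 + dN (4*t) t y2) :
    x1 = x2 ∧ y1 = y2 := by
  have a21 := A2 hy1
  have a22 := A2 hy2
  have hE : eN (4*r) 0 x1 = eN (4*r) 0 x2 := by omega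
  have hD : dN (4*t) 0 y1 = dN (4*t) 0 y2 := by omega
  rw [A3 hx1, A3 hx2] at hE
  rw [A1 hy1, A1 hy2] at hD
  rcases R1 hx1 hx2 hE with hx | hx
  · subst hx
    rcases R2 hy1 hy2 hD with hy | ⟨hy, hy1p, hy2p⟩
    · exact ⟨rfl, hy⟩
    · by_cases hyy : y1 = y2
      · exact ⟨rfl, hyy⟩
      exfalso
      have hdt : dN (4*t) t y1 = dN (4*t) t y2 := by omega
      have a6 := A6 hy1 hy1p
      have hy2e : y2 = 4*t - y1 := by omega
      rw [hy2e] at hdt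
      have h7 : dN (4*t) t y1 = t := by omega
      rcases A7 hy1 h7 with h | h <;> omega
  · rcases R2 hy1 hy2 hD with hy | ⟨hy, hy1p, hy2p⟩
    · subst hy
      exfalso
      have a5 := A5 hx1
      have hx2e : x2 = 4*r - 1 - x1 := by omega
      rw [hx2e] at h3
      omega
    · exfalso
      have a5 := A5 hx1
      have a6 := A6 hy1 hy1p
      have hx2e : x2 = 4*r - 1 - x1 := by omega
      have hy2e : y2 = 4*t - y1 := by omega
      rw [hx2e, hy2e] at h3
      omega

theorem T2 (hr : 1 ≤ r) (ht : 1 ≤ t) (hx1 : x1 < 4*r) (hy1 : y1 < 4*t)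
    (hx2 : x2 < 4*r) (hy2 : y2 < 4*t)
    (h1 : dN (4*r) 0 x1 + eN (4*t) 0 y1 = dN (4*r) 0 x2 + eN (4*t) 0 y2)
    (h2 : dN (4*r) 0 x1 + eN (4*t) (2*t) y1 = dN (4*r) 0 x2 + eN (4*t) (2*t) y2)
    (h3 : dN (4*r) r x1 + eN (4*t) t y1 = dN (4*r) r x2 + eN (4*t) t y2) :
    x1 = x2 ∧ y1 = y2 := by
  have a41 := A4 hy1
  have a42 := A4 hy2
  have hE : eN (4*t) 0 y1 = eN (4*t) 0 y2 := by omega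
  have hD : dN (4*r) 0 x1 = dN (4*r) 0 x2 := by omega
  rw [A3 hy1, A3 hy2] at hE
  rw [A1 hx1, A1 hx2] at hD
  rcases R1 hy1 hy2 hE with hy | hy
  · subst hy
    rcases R2 hx1 hx2 hD with hx | ⟨hx, hx1p, hx2p⟩
    · exact ⟨hx, rfl⟩
    · by_cases hxx : x1 = x2
      · exact ⟨hxx, rfl⟩
      exfalso
      have hdt : dN (4*r) r x1 = dN (4*r) r x2 := by omega
      have a6 := A6 hx1 hx1p
      have hx2e : x2 = 4*r - x1 := by omega
      rw [hx2e] at hdt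
      have h7 : dN (4*r) r x1 = r := by omega
      rcases A7 hx1 h7 with h | h <;> omega
  · rcases R2 hx1 hx2 hD with hx | ⟨hx, hx1p, hx2p⟩
    · subst hx
      exfalso
      have a5 := A5 hy1
      have hy2e : y2 = 4*t - 1 - y1 := by omega
      rw [hy2e] at h3
      omega
    · exfalso
      have a5 := A5 hy1
      have a6 := A6 hx1 hx1p
      have hx2e : x2 = 4*r - x1 := by omega
      have hy2e : y2 = 4*t - 1 - y1 := by omega
      rw [hx2e, hy2e] at h3
      omega

end main

theorem edim_torus (r t : ℕ) (hr : 1 ≤ r) (ht : 1 ≤ t) :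
    edim (cycleGraph (4 * r) □ cycleGraph (4 * t)) = 3 := by
  have hn : 2 ≤ 4 * r := by omega
  have hm : 2 ≤ 4 * t := by omega
  have hn4 : 4 ≤ 4 * r := by omega
  have hm4 : 4 ≤ 4 * t := by omega
  haveI : NeZero (4 * r) := ⟨by omega⟩
  haveI : NeZero (4 * t) := ⟨by omega⟩
  set K := cycleGraph (4 * r) □ cycleGraph (4 * t) with hK
  -- distance formula
  have hdist : ∀ p q : Fin (4 * r) × Fin (4 * t),
      K.dist p q = dN (4 * r) p.1.val q.1.val + dN (4 * t) p.2.val q.2.val := by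
    intro p q
    rw [hK, boxProd_dist (cycle_connected (by omega)) (cycle_connected (by omega)),
      cycle_dist hn, cycle_dist hm]
  have hed : ∀ (v p q : Fin (4 * r) × Fin (4 * t)),
      edgeDist K v s(p, q) = min (K.dist v p) (K.dist v q) := by
    intro v p q
    simp [edgeDist]
  set oN : Fin (4 * r) := ⟨1, by omega⟩ with hoN
  set oM : Fin (4 * t) := ⟨1, by omega⟩ with hoM
  have hoN1 : oN.val = 1 := by rw [hoN]
  have hoM1 : oM.val = 1 := by rw [hoM]
  have hwadd : ∀ x : Fin (4 * r), (x + oN).val = wN (4 * r) x.val := by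
    intro x
    have h := val_add x oN
    rw [hoN1] at h
    exact wn_of x.is_lt (x + oN).is_lt h
  have hwaddM : ∀ y : Fin (4 * t), (y + oM).val = wN (4 * t) y.val := by
    intro y
    have h := val_add y oM
    rw [hoM1] at h
    exact wn_of y.is_lt (y + oM).is_lt h
  have hvsub : ∀ x : Fin (4 * r), (x - oN).val = vN (4 * r) x.val := by
    intro x
    have h := val_sub x oN
    rw [hoN1] at h
    exact vn_of x.is_lt (x - oN).is_lt h
  have hvsubM : ∀ y : Fin (4 * t), (y - oM).val = vN (4 * t) y.val := by
    intro y
    have h := val_sub y oM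
    rw [hoM1] at h
    exact vn_of y.is_lt (y - oM).is_lt h
  -- every edge is horizontal or vertical
  have hshape : ∀ p q : Fin (4 * r) × Fin (4 * t), K.Adj p q →
      (∃ x y, s(p, q) = s((x, y), (x + oN, y))) ∨
        (∃ x y, s(p, q) = s((x, y), (x, y + oM))) := by
    rintro ⟨p1, p2⟩ ⟨q1, q2⟩ h
    rw [hK] at h
    rcases h with ⟨hA, h2⟩ | ⟨hA, h1⟩
    · dsimp only at hA h2
      subst h2
      rw [cycleGraph_adj'] at hA
      rcases hA with h | h
      · -- (p1 - q1).val = 1, so p1 = q1 + oN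
        left
        refine ⟨q1, p2, ?_⟩
        have hsub : p1 - q1 = oN := Fin.ext (by rw [hoN1]; exact h)
        have hq : p1 = q1 + oN := sub_eq_iff_eq_add'.mp hsub
        rw [hq, Sym2.eq_swap]
      · left
        refine ⟨p1, p2, ?_⟩
        have hsub : q1 - p1 = oN := Fin.ext (by rw [hoN1]; exact h)
        have hq : q1 = p1 + oN := sub_eq_iff_eq_add'.mp hsub
        rw [hq]
    · dsimp only at hA h1
      subst h1
      rw [cycleGraph_adj'] at hA
      rcases hA with h | h
      · right
        refine ⟨p1, q2, ?_⟩
        have hsub : p2 - q2 = oM := Fin.ext (by rw [hoM1]; exact h)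
        have hq : p2 = q2 + oM := sub_eq_iff_eq_add'.mp hsub
        rw [hq, Sym2.eq_swap]
      · right
        refine ⟨p1, p2, ?_⟩
        have hsub : q2 - p2 = oM := Fin.ext (by rw [hoM1]; exact h)
        have hq : q2 = p2 + oM := sub_eq_iff_eq_add'.mp hsub
        rw [hq]
  -- edgeDist formulas
  have hHdist : ∀ (w : Fin (4 * r) × Fin (4 * t)) (x : Fin (4 * r)) (y : Fin (4 * t)),
      edgeDist K w s((x, y), (x + oN, y)) =
        eN (4 * r) w.1.val x.val + dN (4 * t) w.2.val y.val := by
    intro w x y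
    rw [hed, hdist, hdist]
    dsimp only
    rw [hwadd]
    unfold eN
    omega
  have hVdist : ∀ (w : Fin (4 * r) × Fin (4 * t)) (x : Fin (4 * r)) (y : Fin (4 * t)),
      edgeDist K w s((x, y), (x, y + oM)) =
        dN (4 * r) w.1.val x.val + eN (4 * t) w.2.val y.val := by
    intro w x y
    rw [hed, hdist, hdist]
    dsimp only
    rw [hwaddM]
    unfold eN
    omega
  -- landmarks
  set a0 : Fin (4 * r) := ⟨0, by omega⟩ with ha0
  set b0 : Fin (4 * t) := ⟨0, by omega⟩ with hb0
  set b2 : Fin (4 * t) := ⟨2 * t, by omega⟩ with hb2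
  set ar : Fin (4 * r) := ⟨r, by omega⟩ with har
  set bt : Fin (4 * t) := ⟨t, by omega⟩ with hbt
  have hva0 : a0.val = 0 := by rw [ha0]
  have hvb0 : b0.val = 0 := by rw [hb0]
  have hvb2 : b2.val = 2 * t := by rw [hb2]
  have hvar : ar.val = r := by rw [har]
  have hvbt : bt.val = t := by rw [hbt]
  -- the generator
  have hgen : IsEdgeMetricGenerator K ↑({(a0, b0), (a0, b2), (ar, bt)} :
      Finset (Fin (4 * r) × Fin (4 * t))) := by
    intro e1
    induction e1 using Sym2.ind with
    | _ p1 q1 =>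
    intro he1 e2
    induction e2 using Sym2.ind with
    | _ p2 q2 =>
    intro he2 hne
    by_contra hcon
    push_neg at hcon
    have h1 := hcon (a0, b0) (by simp)
    have h2 := hcon (a0, b2) (by simp)
    have h3 := hcon (ar, bt) (by simp)
    rcases hshape _ _ ((SimpleGraph.mem_edgeSet _).mp he1) with ⟨x1, y1, hE1⟩ | ⟨x1, y1, hE1⟩ <;>
      rcases hshape _ _ ((SimpleGraph.mem_edgeSet _).mp he2) with ⟨x2, y2, hE2⟩ | ⟨x2, y2, hE2⟩
    · -- H H
      simp only [hE1, hE2, hHdist] at h1 h2 h3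
      obtain ⟨hxx, hyy⟩ := T1 hr ht x1.is_lt y1.is_lt x2.is_lt y2.is_lt h1 h2 h3
      exact hne (by rw [hE1, hE2, Fin.ext hxx, Fin.ext hyy])
    · -- H V
      simp only [hE1, hE2, hHdist, hVdist] at h1 h2
      exact T3 hr ht x1.is_lt y1.is_lt x2.is_lt y2.is_lt h1 h2
    · -- V H
      simp only [hE1, hE2, hHdist, hVdist] at h1 h2
      exact T3 hr ht x2.is_lt y2.is_lt x1.is_lt y1.is_lt h1.symm h2.symm
    · -- V V
      simp only [hE1, hE2, hVdist] at h1 h2 h3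
      obtain ⟨hxx, hyy⟩ := T2 hr ht x1.is_lt y1.is_lt x2.is_lt y2.is_lt h1 h2 h3
      exact hne (by rw [hE1, hE2, Fin.ext hxx, Fin.ext hyy])
  -- cardinality of the generator
  have hb02 : b0 ≠ b2 := by
    intro h
    have := congrArg Fin.val h
    rw [hvb0, hvb2] at this
    omega
  have ha0r : a0 ≠ ar := by
    intro h
    have := congrArg Fin.val h
    rw [hva0, hvar] at this
    omega
  have hcard : ({(a0, b0), (a0, b2), (ar, bt)} :
      Finset (Fin (4 * r) × Fin (4 * t))).card = 3 := by
    rw [Finset.card_insert_of_notMem, Finset.card_insert_of_notMem,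
      Finset.card_singleton]
    · simp only [Finset.mem_singleton]
      intro h
      exact ha0r (congrArg Prod.fst h)
    · simp only [Finset.mem_insert, Finset.mem_singleton]
      rintro (h | h)
      · exact hb02 (congrArg Prod.snd h)
      · exact ha0r (congrArg Prod.fst h)
  have hmem3 : 3 ∈ {k | ∃ S : Finset (Fin (4 * r) × Fin (4 * t)),
      S.card = k ∧ IsEdgeMetricGenerator K ↑S} :=
    ⟨{(a0, b0), (a0, b2), (ar, bt)}, hcard, hgen⟩
  -- lower bound
  have hlow : ∀ S' : Finset (Fin (4 * r) × Fin (4 * t)),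
      IsEdgeMetricGenerator K ↑S' → 3 ≤ S'.card := by
    intro S' hgen'
    by_contra hcard'
    push_neg at hcard'
    obtain ⟨u, v, hcover⟩ : ∃ u v : Fin (4 * r) × Fin (4 * t),
        ∀ w ∈ S', w = u ∨ w = v := by
      rcases hc0 : S'.card with _ | n
      · refine ⟨(a0, b0), (a0, b0), fun w hw => ?_⟩
        rw [Finset.card_eq_zero.mp hc0] at hw
        simp at hw
      rcases n with _ | n
      · obtain ⟨a, ha⟩ := Finset.card_eq_one.mp hc0
        refine ⟨a, a, fun w hw => ?_⟩
        rw [ha] at hw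
        simp at hw
        tauto
      rcases n with _ | n
      · obtain ⟨a, b, _, hab⟩ := Finset.card_eq_two.mp hc0
        refine ⟨a, b, fun w hw => ?_⟩
        rw [hab] at hw
        simpa using hw
      · omega
    obtain ⟨u1, u2⟩ := u
    obtain ⟨v1, v2⟩ := v
    -- adjacency helpers
    have hadjR : ∀ x : Fin (4 * r), ∀ y : Fin (4 * t), K.Adj (x, y) (x + oN, y) := by
      intro x y
      rw [hK]
      refine boxProd_adj.mpr (Or.inl ⟨?_, rfl⟩)
      rw [cycleGraph_adj']
      right
      simp only [add_sub_cancel_left, hoN1]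
    have hadjL : ∀ x : Fin (4 * r), ∀ y : Fin (4 * t), K.Adj (x, y) (x - oN, y) := by
      intro x y
      rw [hK]
      refine boxProd_adj.mpr (Or.inl ⟨?_, rfl⟩)
      rw [cycleGraph_adj']
      left
      simp only [sub_sub_cancel, hoN1]
    have hadjU : ∀ x : Fin (4 * r), ∀ y : Fin (4 * t), K.Adj (x, y) (x, y + oM) := by
      intro x y
      rw [hK]
      refine boxProd_adj.mpr (Or.inr ⟨?_, rfl⟩)
      rw [cycleGraph_adj']
      right
      simp only [add_sub_cancel_left, hoM1]
    have hadjD : ∀ x : Fin (4 * r), ∀ y : Fin (4 * t), K.Adj (x, y) (x, y - oM) := by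
      intro x y
      rw [hK]
      refine boxProd_adj.mpr (Or.inr ⟨?_, rfl⟩)
      rw [cycleGraph_adj']
      left
      simp only [sub_sub_cancel, hoM1]
    by_cases hA : dN (4 * r) v1.val u1.val = 0 ∨ dN (4 * r) v1.val u1.val = 2 * r
    · -- horizontal pair around u
      have hne12 : s((u1, u2), (u1 + oN, u2)) ≠ s((u1 - oN, u2), (u1, u2)) := by
        intro h
        rw [Sym2.eq_iff] at h
        have := u1.is_lt
        rcases h with ⟨ha, hb⟩ | ⟨ha, hb⟩
        · have h' := congrArg (fun p : Fin (4 * r) × Fin (4 * t) => p.1.val) hb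
          dsimp only at h'
          rw [hwadd] at h'
          unfold wN at h'
          split_ifs at h' <;> omega
        · have h' := congrArg (fun p : Fin (4 * r) × Fin (4 * t) => p.1.val) hb
          dsimp only at h'
          rw [hwadd, hvsub] at h'
          unfold wN vN at h'
          split_ifs at h' <;> omega
      obtain ⟨w, hwS, hwne⟩ := hgen' _ ((SimpleGraph.mem_edgeSet _).mpr (hadjR u1 u2)) _
        ((SimpleGraph.mem_edgeSet _).mpr ((hadjL u1 u2).symm)) hne12
      apply hwne
      rcases hcover w hwS with rfl | rfl
      · simp only [hed, SimpleGraph.dist_self]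
        omega
      · simp only [hed, hdist]
        rw [hwadd, hvsub]
        have l1 := L1 v1.is_lt u1.is_lt hr hA
        omega
    by_cases hB : dN (4 * t) v2.val u2.val = 0 ∨ dN (4 * t) v2.val u2.val = 2 * t
    · -- vertical pair around u
      have hne12 : s((u1, u2), (u1, u2 + oM)) ≠ s((u1, u2 - oM), (u1, u2)) := by
        intro h
        rw [Sym2.eq_iff] at h
        have := u2.is_lt
        rcases h with ⟨ha, hb⟩ | ⟨ha, hb⟩
        · have h' := congrArg (fun p : Fin (4 * r) × Fin (4 * t) => p.2.val) hb
          dsimp only at h'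
          rw [hwaddM] at h'
          unfold wN at h'
          split_ifs at h' <;> omega
        · have h' := congrArg (fun p : Fin (4 * r) × Fin (4 * t) => p.2.val) hb
          dsimp only at h'
          rw [hwaddM, hvsubM] at h'
          unfold wN vN at h'
          split_ifs at h' <;> omega
      obtain ⟨w, hwS, hwne⟩ := hgen' _ ((SimpleGraph.mem_edgeSet _).mpr (hadjU u1 u2)) _
        ((SimpleGraph.mem_edgeSet _).mpr ((hadjD u1 u2).symm)) hne12
      apply hwne
      rcases hcover w hwS with rfl | rfl
      · simp only [hed, SimpleGraph.dist_self]
        omega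
      · simp only [hed, hdist]
        rw [hwaddM, hvsubM]
        have l1 := L1 v2.is_lt u2.is_lt ht hB
        omega
    · -- general position
      push_neg at hA hB
      obtain ⟨a', hadja, ha'⟩ : ∃ a' : Fin (4 * r), K.Adj (u1, u2) (a', u2) ∧
          dN (4 * r) v1.val a'.val = dN (4 * r) v1.val u1.val + 1 := by
        rcases L2 v1.is_lt u1.is_lt hr hA.1 hA.2 with hL | hL
        · exact ⟨u1 + oN, hadjR u1 u2, by rw [hwadd]; exact hL⟩
        · exact ⟨u1 - oN, hadjL u1 u2, by rw [hvsub]; exact hL⟩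
      obtain ⟨b', hadjb, hb'⟩ : ∃ b' : Fin (4 * t), K.Adj (u1, u2) (u1, b') ∧
          dN (4 * t) v2.val b'.val = dN (4 * t) v2.val u2.val + 1 := by
        rcases L2 v2.is_lt u2.is_lt ht hB.1 hB.2 with hL | hL
        · exact ⟨u2 + oM, hadjU u1 u2, by rw [hwaddM]; exact hL⟩
        · exact ⟨u2 - oM, hadjD u1 u2, by rw [hvsubM]; exact hL⟩
      have ha'ne : a' ≠ u1 := by
        intro h
        rw [h] at ha'
        omega
      have hne12 : s((u1, u2), (a', u2)) ≠ s((u1, u2), (u1, b')) := by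
        intro h
        rw [Sym2.eq_iff] at h
        rcases h with ⟨ha, hb⟩ | ⟨ha, hb⟩
        · exact ha'ne (congrArg Prod.fst hb)
        · exact ha'ne (congrArg Prod.fst hb)
      obtain ⟨w, hwS, hwne⟩ := hgen' _ ((SimpleGraph.mem_edgeSet _).mpr hadja) _
        ((SimpleGraph.mem_edgeSet _).mpr hadjb) hne12
      apply hwne
      rcases hcover w hwS with rfl | rfl
      · simp only [hed, SimpleGraph.dist_self]
        omega
      · simp only [hed, hdist]
        omega
  -- conclude
  unfold edim
  refine le_antisymm (Nat.sInf_le hmem3) (le_csInf ⟨3, hmem3⟩ ?_)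
  rintro k ⟨S', hS'c, hS'g⟩
  rw [← hS'c]
  exact hlow S' hS'g
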